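/- For the constrained PI closed-loop system ẋ = B sat(−Bᵀ∇H(x) − x_c; u⁻, u⁺), ẋ_c = Bᵀ∇H(x), the function V(x, x_c) = 𝟙ₘᵀ S(−Bᵀ∇H(x) − x_c; u⁻, u⁺) + H(x) satisfies d/dt V = −‖B sat(−Bᵀ∇H(x) − x_c; u⁻, u⁺)‖² ≤ 0 along solutions, where S(·; u⁻, u⁺)ᵢ(w) = ∫₀^{wᵢ} sat(y; u⁻ᵢ, u⁺ᵢ) dy. -/

import Mathlib

open Matrix

/-- The scalar saturation function. -/
noncomputable def satFn (x a b : ℝ) : ℝ := max a (min b x)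

/-- `Sint a b x = ∫₀ˣ sat(y; a, b) dy`. -/
noncomputable def Sint (a b x : ℝ) : ℝ := ∫ y in (0 : ℝ)..x, satFn y a b

/-- The continuous linear map `v ↦ g ⬝ᵥ v`, used to express gradients of functions
on `ι → ℝ`. -/
noncomputable def dotCLM {ι : Type} [Fintype ι] (g : ι → ℝ) : (ι → ℝ) →L[ℝ] ℝ :=
  LinearMap.toContinuousLinearMap
    (∑ i : ι, g i • (LinearMap.proj i : (ι → ℝ) →ₗ[ℝ] ℝ))

/-- for the constrained PI closed loop
`ẋ = B sat(−Bᵀ∇H(x) − x_c; u⁻, u⁺)`, `ẋ_c = Bᵀ∇H(x)`, the function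
`V(x, x_c) = 𝟙ₘᵀ S(−Bᵀ∇H(x) − x_c; u⁻, u⁺) + H(x)` satisfies
`d/dt V = −‖B sat(−Bᵀ∇H(x) − x_c; u⁻, u⁺)‖² ≤ 0` along solutions.
(The hypothesis `hgx` records the chain rule `d/dt ∇H(x(t)) = ẋ(t)`.) -/
theorem stmt_15 {V E : Type} [Fintype V] [Fintype E] [DecidableEq V] [DecidableEq E]
    (head tail : E → V)
    (B : Matrix V E ℝ)
    (hB : ∀ v e, B v e = (if head e = v then (1 : ℝ) else 0) - (if tail e = v then 1 else 0))
    (uminus uplus : E → ℝ) (hu : ∀ e, uminus e ≤ 0 ∧ 0 < uplus e)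
    (H : (V → ℝ) → ℝ) (hH2 : ContDiff ℝ 2 H)
    (gradH : (V → ℝ) → (V → ℝ))
    (hH : ∀ p, HasFDerivAt H (dotCLM (gradH p)) p)
    (x : ℝ → V → ℝ) (xc : ℝ → E → ℝ)
    (hx : ∀ t, HasDerivAt x
      (B.mulVec fun e => satFn (-(Bᵀ.mulVec (gradH (x t)) e) - xc t e) (uminus e) (uplus e)) t)
    (hxc : ∀ t, HasDerivAt xc (Bᵀ.mulVec (gradH (x t))) t)
    (hgx : ∀ t, HasDerivAt (fun s => gradH (x s))
      (B.mulVec fun e => satFn (-(Bᵀ.mulVec (gradH (x t)) e) - xc t e) (uminus e) (uplus e)) t) :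
    ∀ t : ℝ,
      HasDerivAt
        (fun s => (∑ e : E, Sint (uminus e) (uplus e) (-(Bᵀ.mulVec (gradH (x s)) e) - xc s e))
          + H (x s))
        (-((B.mulVec fun e => satFn (-(Bᵀ.mulVec (gradH (x t)) e) - xc t e) (uminus e) (uplus e))
          ⬝ᵥ (B.mulVec fun e => satFn (-(Bᵀ.mulVec (gradH (x t)) e) - xc t e) (uminus e) (uplus e)))) t ∧
      -((B.mulVec fun e => satFn (-(Bᵀ.mulVec (gradH (x t)) e) - xc t e) (uminus e) (uplus e))
          ⬝ᵥ (B.mulVec fun e => satFn (-(Bᵀ.mulVec (gradH (x t)) e) - xc t e) (uminus e) (uplus e))) ≤ 0 := by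
  intro t
  set f : E → ℝ := fun e => satFn (-(Bᵀ.mulVec (gradH (x t)) e) - xc t e) (uminus e) (uplus e)
    with hf
  have hgx' : ∀ v, HasDerivAt (fun s => gradH (x s) v) (B.mulVec f v) t := fun v =>
    hasDerivAt_pi.mp (hgx t) v
  have hxc' : ∀ e, HasDerivAt (fun s => xc s e) (Bᵀ.mulVec (gradH (x t)) e) t := fun e =>
    hasDerivAt_pi.mp (hxc t) e
  have hw : ∀ e, HasDerivAt (fun s => -(Bᵀ.mulVec (gradH (x s)) e) - xc s e)
      (-(Bᵀ.mulVec (B.mulVec f) e) - Bᵀ.mulVec (gradH (x t)) e) t := by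
    intro e
    have h1 : HasDerivAt (fun s => Bᵀ.mulVec (gradH (x s)) e) (Bᵀ.mulVec (B.mulVec f) e) t := by
      simp only [Matrix.mulVec, dotProduct]
      exact HasDerivAt.fun_sum fun v _ => (hgx' v).const_mul _
    exact h1.neg.sub (hxc' e)
  have hSat : ∀ a b : ℝ, Continuous (fun y : ℝ => satFn y a b) := fun a b =>
    continuous_const.max (continuous_const.min continuous_id)
  have hS : ∀ e, HasDerivAt
      (fun s => Sint (uminus e) (uplus e) (-(Bᵀ.mulVec (gradH (x s)) e) - xc s e))
      (f e * (-(Bᵀ.mulVec (B.mulVec f) e) - Bᵀ.mulVec (gradH (x t)) e)) t := by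
    intro e
    have h0 : HasDerivAt (fun y => Sint (uminus e) (uplus e) y)
        (satFn (-(Bᵀ.mulVec (gradH (x t)) e) - xc t e) (uminus e) (uplus e))
        (-(Bᵀ.mulVec (gradH (x t)) e) - xc t e) :=
      ((hSat (uminus e) (uplus e)).integral_hasStrictDerivAt 0 _).hasDerivAt
    exact h0.comp t (hw e)
  have hsum : HasDerivAt
      (fun s => ∑ e : E, Sint (uminus e) (uplus e) (-(Bᵀ.mulVec (gradH (x s)) e) - xc s e))
      (∑ e : E, f e * (-(Bᵀ.mulVec (B.mulVec f) e) - Bᵀ.mulVec (gradH (x t)) e)) t :=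
    HasDerivAt.fun_sum fun e _ => hS e
  have hHx : HasDerivAt (fun s => H (x s)) (gradH (x t) ⬝ᵥ B.mulVec f) t := by
    have h := (hH (x t)).comp_hasDerivAt t (hx t)
    refine h.congr_deriv ?_
    simp [dotCLM, dotProduct, hf]
  have htot := hsum.add hHx
  have key : ∀ u : V → ℝ, f ⬝ᵥ Bᵀ.mulVec u = B.mulVec f ⬝ᵥ u := by
    intro u; rw [Matrix.dotProduct_mulVec, Matrix.vecMul_transpose]
  have expand : (∑ e : E, f e * (-(Bᵀ.mulVec (B.mulVec f) e) - Bᵀ.mulVec (gradH (x t)) e))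
      = -(f ⬝ᵥ Bᵀ.mulVec (B.mulVec f)) - f ⬝ᵥ Bᵀ.mulVec (gradH (x t)) := by
    simp only [dotProduct, mul_sub, mul_neg, ← Finset.sum_neg_distrib,
      Finset.sum_sub_distrib]
  constructor
  · refine htot.congr_deriv ?_
    rw [expand, key, key, dotProduct_comm (gradH (x t))]
    ring
  · have : (0:ℝ) ≤ B.mulVec f ⬝ᵥ B.mulVec f :=
      Finset.sum_nonneg fun i _ => mul_self_nonneg _
    linarith
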